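/- Let k be a field of characteristic zero, B an integral domain containing k, D a locally nilpotent k-derivation of B with kernel A = ker D, and for each n ≥ 0 let I_n = A ∩ D^n(B). If E is a k-derivation of B with [D,E] = 0 (commutator of operators), then E(I_n) ⊆ I_n for all n ≥ 0. -/
import Mathlib


/-- If `D` is a locally nilpotent `k`-derivation of an integral `k`-domain `B`
with kernel `A` and image ideals `I_n = A ∩ D^n(B)`, and `E` is a `k`-derivation commuting
with `D`, then `E(I_n) ⊆ I_n` for all `n ≥ 0`. -/
theorem stmt_0 {k B : Type*} [Field k] [CharZero k] [CommRing B] [IsDomain B] [Algebra k B]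
    (D : Derivation k B B)
    (hD : ∀ b : B, ∃ n : ℕ, (D.toLinearMap ^ n) b = 0)
    (E : Derivation k B B) (hDE : ⁅D, E⁆ = 0)
    (n : ℕ) (x : B)
    (hxA : D x = 0) (hxI : ∃ b : B, (D.toLinearMap ^ n) b = x) :
    D (E x) = 0 ∧ ∃ b : B, (D.toLinearMap ^ n) b = E x := by
  have hcomm : ∀ b : B, D (E b) = E (D b) := by
    intro b
    have := congrArg (fun f : Derivation k B B => f b) hDE
    simpa [Derivation.commutator_apply, sub_eq_zero] using this
  have hpow : ∀ m : ℕ, ∀ b : B, E ((D.toLinearMap ^ m) b) = (D.toLinearMap ^ m) (E b) := by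
    intro m
    induction m with
    | zero => intro b; simp
    | succ m ih =>
      intro b
      have : (D.toLinearMap ^ (m + 1)) b = (D.toLinearMap ^ m) (D b) := by
        rw [pow_succ]; rfl
      rw [this, ih (D b), ← hcomm b]
      have : (D.toLinearMap ^ (m + 1)) (E b) = (D.toLinearMap ^ m) (D (E b)) := by
        rw [pow_succ]; rfl
      rw [this]
  refine ⟨by rw [hcomm, hxA, map_zero], ?_⟩
  obtain ⟨b, hb⟩ := hxI
  exact ⟨E b, by rw [← hpow n b, hb]⟩
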